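/- One has ∏_{i=1}^n (1+β·x_i) / ∏_{i=1}^n (1+β·w_i) = 1 + β · Σ_{i=1}^n [∏_{j=1}^n (x_i ⊖ w_j)] / [∏_{j≠i} (x_i ⊖ x_j)]. -/

import Mathlib

/-- `∏ᵢ(1+βxᵢ)/∏ᵢ(1+βwᵢ) = 1 + β Σᵢ ∏ⱼ(xᵢ ⊖ wⱼ) / ∏_{j≠i}(xᵢ ⊖ xⱼ)`,
where `a ⊖ b := (a - b)/(1 + β b)`. -/
theorem stmt2 {K : Type*} [Field K] (β : K) (n : ℕ) (hn : 1 ≤ n)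
    (x w : Fin n → K)
    (hx : Function.Injective x)
    (hxu : ∀ i, 1 + β * x i ≠ 0)
    (hwu : ∀ i, 1 + β * w i ≠ 0)
    (ominus : K → K → K)
    (hominus : ∀ a b, ominus a b = (a - b) / (1 + β * b)) :
    (∏ i, (1 + β * x i)) / (∏ i, (1 + β * w i))
      = 1 + β * ∑ i, (∏ j, ominus (x i) (w j))
            / (∏ j ∈ Finset.univ.erase i, ominus (x i) (x j)) := by
  classical
  rcases eq_or_ne β 0 with hβ | hβ
  · subst hβ; simp
  set A : K := ∏ i, (1 + β * x i) with hA
  set Wp : K := ∏ i, (1 + β * w i) with hW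
  have hA0 : A ≠ 0 := Finset.prod_ne_zero_iff.2 fun i _ => hxu i
  have hW0 : Wp ≠ 0 := Finset.prod_ne_zero_iff.2 fun i _ => hwu i
  set y : K := -β⁻¹ with hy
  have hyx : ∀ i, y - x i = -β⁻¹ * (1 + β * x i) := by
    intro i; linear_combination hy + x i * inv_mul_cancel₀ hβ
  have hyw : ∀ i, y - w i = -β⁻¹ * (1 + β * w i) := by
    intro i; linear_combination hy + w i * inv_mul_cancel₀ hβ
  have hyxne : ∀ i ∈ (Finset.univ : Finset (Fin n)), y ≠ x i := by
    intro i _ h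
    have : y - x i = 0 := sub_eq_zero.2 h
    rw [hyx i] at this
    exact (mul_ne_zero (neg_ne_zero.2 (inv_ne_zero hβ)) (hxu i)) this
  have hvs : Set.InjOn x (Finset.univ : Finset (Fin n)) := hx.injOn
  -- the interpolation identity
  set Pw : Polynomial K := Lagrange.nodal Finset.univ w with hPw
  set Px : Polynomial K := Lagrange.nodal Finset.univ x with hPx
  have hcard : ((Finset.univ : Finset (Fin n)).card : WithBot ℕ) = (n : WithBot ℕ) := by
    simp
  have hdeg : (Pw - Px).degree < ((Finset.univ : Finset (Fin n)).card : ℕ) := by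
    have h1 : Pw.degree = Px.degree := by
      rw [hPw, hPx, Lagrange.degree_nodal, Lagrange.degree_nodal]
    have h2 : Pw ≠ 0 := Lagrange.nodal_ne_zero
    have h3 : Pw.leadingCoeff = Px.leadingCoeff := by
      rw [(Lagrange.nodal_monic).leadingCoeff, (Lagrange.nodal_monic).leadingCoeff]
    have := Polynomial.degree_sub_lt h1 h2 h3
    rw [hPw, Lagrange.degree_nodal] at this
    exact_mod_cast this
  have hinterp := Lagrange.eq_interpolate (f := Pw - Px) hvs hdeg
  have heval := congrArg (Polynomial.eval y) hinterp
  rw [Lagrange.eval_interpolate_not_at_node _ hyxne] at heval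
  simp only [hPw, hPx, Polynomial.eval_sub, Lagrange.eval_nodal,
    Lagrange.eval_nodal_at_node (Finset.mem_univ _), sub_zero] at heval
  -- rewrite the products over (y - ·)
  have hprodx : (∏ j, (y - x j)) = (-β⁻¹) ^ n * A := by
    rw [hA]
    rw [show (∏ j, (y - x j)) = ∏ j, (-β⁻¹ * (1 + β * x j)) from
      Finset.prod_congr rfl fun j _ => hyx j]
    rw [Finset.prod_mul_distrib, Finset.prod_const, Finset.card_univ, Fintype.card_fin]
  have hprodw : (∏ j, (y - w j)) = (-β⁻¹) ^ n * Wp := by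
    rw [hW]
    rw [show (∏ j, (y - w j)) = ∏ j, (-β⁻¹ * (1 + β * w j)) from
      Finset.prod_congr rfl fun j _ => hyw j]
    rw [Finset.prod_mul_distrib, Finset.prod_const, Finset.card_univ, Fintype.card_fin]
  set S : K := ∑ i, Lagrange.nodalWeight Finset.univ x i * (1 + β * x i)⁻¹ *
      ∏ j, (x i - w j) with hS
  have hc0 : (-β⁻¹ : K) ^ n ≠ 0 := pow_ne_zero _ (neg_ne_zero.2 (inv_ne_zero hβ))
  have hsum : (∑ i, Lagrange.nodalWeight Finset.univ x i * (y - x i)⁻¹ *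
      ∏ j, (x i - w j)) = -β * S := by
    rw [hS, Finset.mul_sum]
    refine Finset.sum_congr rfl fun i _ => ?_
    rw [hyx i, mul_inv]
    have : (-β⁻¹ : K)⁻¹ = -β := by
      rw [inv_neg, inv_inv]
    rw [this]
    ring
  rw [hprodx, hprodw, hsum] at heval
  -- heval : c*Wp - c*A = c*A * (-β * S)
  have hkey : β * S = (A - Wp) / A := by
    have h1 : Wp - A = A * (-β * S) :=
      mul_left_cancel₀ hc0 (by linear_combination heval)
    rw [eq_div_iff hA0]
    linear_combination h1
  -- rewrite the goal sum termwise
  have hterm : ∀ i, (∏ j, ominus (x i) (w j))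
      / (∏ j ∈ Finset.univ.erase i, ominus (x i) (x j))
      = (A / Wp) * (Lagrange.nodalWeight Finset.univ x i * (1 + β * x i)⁻¹ *
          ∏ j, (x i - w j)) := by
    intro i
    have hnum : (∏ j, ominus (x i) (w j)) = (∏ j, (x i - w j)) / Wp := by
      rw [hW]
      rw [show (∏ j, ominus (x i) (w j)) = ∏ j, ((x i - w j) / (1 + β * w j)) from
        Finset.prod_congr rfl fun j _ => hominus _ _]
      rw [Finset.prod_div_distrib]
    have hden : (∏ j ∈ Finset.univ.erase i, ominus (x i) (x j))
        = (∏ j ∈ Finset.univ.erase i, (x i - x j))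
          / (∏ j ∈ Finset.univ.erase i, (1 + β * x j)) := by
      rw [show (∏ j ∈ Finset.univ.erase i, ominus (x i) (x j))
          = ∏ j ∈ Finset.univ.erase i, ((x i - x j) / (1 + β * x j)) from
        Finset.prod_congr rfl fun j _ => hominus _ _]
      rw [Finset.prod_div_distrib]
    have hnw : Lagrange.nodalWeight Finset.univ x i
        = (∏ j ∈ Finset.univ.erase i, (x i - x j))⁻¹ := by
      rw [Lagrange.nodalWeight, ← Finset.prod_inv_distrib]
    have hAe : (1 + β * x i) * ∏ j ∈ Finset.univ.erase i, (1 + β * x j) = A :=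
      Finset.mul_prod_erase Finset.univ (fun j => 1 + β * x j) (Finset.mem_univ i)
    have hD0 : (∏ j ∈ Finset.univ.erase i, (x i - x j)) ≠ 0 :=
      Finset.prod_ne_zero_iff.2 fun j hj =>
        sub_ne_zero.2 fun h => (Finset.mem_erase.1 hj).1 (hx h).symm
    have hE0 : (∏ j ∈ Finset.univ.erase i, (1 + β * x j)) ≠ 0 :=
      Finset.prod_ne_zero_iff.2 fun j _ => hxu j
    rw [hnum, hden, hnw, ← hAe]
    set u := 1 + β * x i with hu
    have hu0 : u ≠ 0 := hxu i
    field_simp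
  rw [show (∑ i, (∏ j, ominus (x i) (w j))
      / (∏ j ∈ Finset.univ.erase i, ominus (x i) (x j)))
      = (A / Wp) * S from by
    rw [hS, Finset.mul_sum]; exact Finset.sum_congr rfl fun i _ => hterm i]
  have : β * ((A / Wp) * S) = (A / Wp) * (β * S) := by ring
  rw [this, hkey]
  field_simp
  ring
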